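/- Fix an integer p ≥ 1, set n = 2p, and let θ, the couplings g_{ab} (with g ≠ 0 and g_2 arbitrary real numbers), and the matrices F_{ab} be as in the q = p case of the AIII construction. Then the constraint equation Σ_{α} g_α F_α = 0 holds: Σ_{1 ≤ a ≠ b ≤ n} g_{ab}·F_{ab} = 0 as an n×n matrix. -/

import Mathlib

open Matrix

/-- The involution `θ` of `{1,…,2p}` (0-based: `{0,…,2p−1}`) exchanging the first
and third blocks: `θ(a) = a + p` for `a < p` and `θ(a) = a − p` otherwise. -/
def theta1 (p : ℕ) (a : Fin (2*p)) : Fin (2*p) :=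
  if h : (a : ℕ) < p then ⟨a + p, by omega⟩
  else ⟨(a : ℕ) - p, by have := a.isLt; omega⟩

/-- The coupling constants for the AIII construction with `q = p`:
`g_{aa} = 0`, `g_{ab} = g₂` if `b = θ(a)`, and `g_{ab} = g` otherwise. -/
def g10 (p : ℕ) (g g2 : ℝ) (a b : Fin (2*p)) : ℝ :=
  if a = b then 0 else if b = theta1 p a then g2 else g

/-- The matrices `F_{ab} = -(1/4)(E_{aa} + E_{θ(a)θ(a)} + E_{bb} + E_{θ(b)θ(b)}) + (1/n)·1`
for the AIII construction with `q = p`, `n = 2p`. -/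
noncomputable def F10 (p : ℕ) (a b : Fin (2*p)) : Matrix (Fin (2*p)) (Fin (2*p)) ℝ :=
  -(1/4 : ℝ) • (single a a 1 + single (theta1 p a) (theta1 p a) 1
      + single b b 1 + single (theta1 p b) (theta1 p b) 1)
    + ((2*p : ℝ))⁻¹ • 1


lemma theta1_val (p : ℕ) (a : Fin (2*p)) :
    (theta1 p a : ℕ) = if (a : ℕ) < p then a + p else a - p := by
  simp only [theta1]; split_ifs <;> rfl
lemma theta1_invol (p : ℕ) (a : Fin (2*p)) : theta1 p (theta1 p a) = a := by
  have := a.isLt; apply Fin.ext; rw [theta1_val, theta1_val]; split_ifs <;> omega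
lemma theta1_ne (p : ℕ) (a : Fin (2*p)) : theta1 p a ≠ a := by
  have := a.isLt; simp only [ne_eq, Fin.ext_iff, theta1_val]; split_ifs <;> omega
lemma theta1_eq_iff (p : ℕ) (a i : Fin (2*p)) : theta1 p a = i ↔ a = theta1 p i := by
  constructor
  · rintro rfl; rw [theta1_invol]
  · rintro rfl; rw [theta1_invol]

lemma g10_symm (p : ℕ) (g g2 : ℝ) (a b : Fin (2*p)) : g10 p g g2 a b = g10 p g g2 b a := by
  unfold g10
  have h : b = theta1 p a ↔ a = theta1 p b := by
    rw [eq_comm, theta1_eq_iff, eq_comm]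
  rcases eq_or_ne a b with rfl | hab
  · simp
  · rw [if_neg hab, if_neg (Ne.symm hab)]
    exact if_congr h rfl rfl

lemma g10_decomp (p : ℕ) (g g2 : ℝ) (a b : Fin (2*p)) :
    g10 p g g2 a b = g + (if b = a then -g else 0) + (if b = theta1 p a then g2 - g else 0) := by
  unfold g10
  rcases eq_or_ne a b with rfl | hab
  · rw [if_pos rfl, if_pos rfl, if_neg (theta1_ne p a).symm]
    ring
  · rw [if_neg hab, if_neg (Ne.symm hab)]
    split_ifs <;> ring

lemma sum_g_right (p : ℕ) (g g2 : ℝ) (a : Fin (2*p)) :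
    ∑ b, g10 p g g2 a b = g2 + ((2*p : ℝ) - 2)*g := by
  simp only [g10_decomp]
  rw [Finset.sum_add_distrib, Finset.sum_add_distrib, Finset.sum_const,
    Finset.sum_ite_eq' Finset.univ a, Finset.sum_ite_eq' Finset.univ (theta1 p a)]
  simp [Fintype.card_fin]
  ring

lemma sum_g_left (p : ℕ) (g g2 : ℝ) (b : Fin (2*p)) :
    ∑ a, g10 p g g2 a b = g2 + ((2*p : ℝ) - 2)*g := by
  simp only [g10_symm p g g2 _ b]
  exact sum_g_right p g g2 b

lemma F10_apply (p : ℕ) (a b i j : Fin (2*p)) : F10 p a b i j =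
    if i = j then (-(1/4) * ((if a = i then (1:ℝ) else 0)+(if theta1 p a = i then 1 else 0)
      +(if b = i then 1 else 0)+(if theta1 p b = i then 1 else 0)) + (2*p:ℝ)⁻¹) else 0 := by
  simp only [F10, Matrix.add_apply, Matrix.smul_apply, Matrix.one_apply, Matrix.single,
    Matrix.of_apply, smul_eq_mul]
  rcases eq_or_ne i j with rfl | hij
  · simp [and_self]
  · rw [if_neg hij, if_neg hij]
    have : ∀ c : Fin (2*p), (if c = i ∧ c = j then (1:ℝ) else 0) = 0 := by
      intro c; rw [if_neg]; rintro ⟨rfl, rfl⟩; exact hij rfl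
    rw [this, this, this, this]
    ring

theorem stmt_12 (p : ℕ) (hp : 1 ≤ p) (g g2 : ℝ) (hg : g ≠ 0) :
    ∑ a : Fin (2*p), ∑ b ∈ Finset.univ.filter (fun b : Fin (2*p) => b ≠ a),
      g10 p g g2 a b • F10 p a b = 0 := by
  have hfilter : ∀ a : Fin (2*p),
      ∑ b ∈ Finset.univ.filter (fun b : Fin (2*p) => b ≠ a), g10 p g g2 a b • F10 p a b
        = ∑ b, g10 p g g2 a b • F10 p a b := by
    intro a
    rw [Finset.sum_filter]
    refine Finset.sum_congr rfl fun b _ => ?_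
    rcases eq_or_ne b a with rfl | h
    · simp [g10]
    · rw [if_pos h]
  simp only [hfilter]
  ext i j
  rw [Matrix.zero_apply]
  simp only [Matrix.sum_apply, Matrix.smul_apply, F10_apply, smul_eq_mul]
  rcases eq_or_ne i j with rfl | hij
  · simp only [eq_self_iff_true, if_true]
    set S : ℝ := g2 + ((2*p : ℝ) - 2)*g with hS
    have key : ∀ a : Fin (2*p), ∑ b, g10 p g g2 a b *
        (-(1/4) * ((if a = i then (1:ℝ) else 0)+(if theta1 p a = i then 1 else 0)
          +(if b = i then 1 else 0)+(if theta1 p b = i then 1 else 0)) + (2*p:ℝ)⁻¹)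
        = -(1/4) * (S * ((if a = i then (1:ℝ) else 0)+(if theta1 p a = i then 1 else 0))
            + g10 p g g2 a i + g10 p g g2 a (theta1 p i)) + (2*p:ℝ)⁻¹ * S := by
      intro a
      have step : ∀ b : Fin (2*p), g10 p g g2 a b *
          (-(1/4) * ((if a = i then (1:ℝ) else 0)+(if theta1 p a = i then 1 else 0)
            +(if b = i then 1 else 0)+(if theta1 p b = i then 1 else 0)) + (2*p:ℝ)⁻¹)
          = (-(1/4) * ((if a = i then (1:ℝ) else 0)+(if theta1 p a = i then 1 else 0))
              * g10 p g g2 a b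
            + -(1/4) * (if b = i then g10 p g g2 a b else 0)
            + -(1/4) * (if b = theta1 p i then g10 p g g2 a b else 0)
            + (2*p:ℝ)⁻¹ * g10 p g g2 a b) := by
        intro b
        simp only [theta1_eq_iff p b i]
        split_ifs <;> ring
      rw [Finset.sum_congr rfl fun b _ => step b]
      rw [Finset.sum_add_distrib, Finset.sum_add_distrib, Finset.sum_add_distrib,
        ← Finset.mul_sum, ← Finset.mul_sum, ← Finset.mul_sum, ← Finset.mul_sum,
        Finset.sum_ite_eq' Finset.univ i, Finset.sum_ite_eq' Finset.univ (theta1 p i),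
        sum_g_right]
      simp only [Finset.mem_univ, if_true, ← hS]
      ring
    rw [Finset.sum_congr rfl fun a _ => key a]
    have step2 : ∀ a : Fin (2*p),
        -(1/4) * (S * ((if a = i then (1:ℝ) else 0)+(if theta1 p a = i then 1 else 0))
            + g10 p g g2 a i + g10 p g g2 a (theta1 p i)) + (2*p:ℝ)⁻¹ * S
        = (-(1/4) * S * (if a = i then (1:ℝ) else 0)
          + -(1/4) * S * (if a = theta1 p i then (1:ℝ) else 0)
          + -(1/4) * g10 p g g2 a i + -(1/4) * g10 p g g2 a (theta1 p i)
          + (2*p:ℝ)⁻¹ * S) := by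
      intro a
      simp only [theta1_eq_iff p a i]
      split_ifs <;> ring
    rw [Finset.sum_congr rfl fun a _ => step2 a]
    rw [Finset.sum_add_distrib, Finset.sum_add_distrib, Finset.sum_add_distrib,
      Finset.sum_add_distrib,
      ← Finset.mul_sum, ← Finset.mul_sum, ← Finset.mul_sum, ← Finset.mul_sum,
      Finset.sum_ite_eq' Finset.univ i, Finset.sum_ite_eq' Finset.univ (theta1 p i),
      sum_g_left, sum_g_left, Finset.sum_const, Finset.card_univ, Fintype.card_fin]
    simp only [Finset.mem_univ, if_true, ← hS, nsmul_eq_mul]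
    have hup : (2*p : ℝ) ≠ 0 := by positivity
    push_cast
    field_simp
    ring
  · simp [hij]
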